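/- Let μ ∈ (1,2) and n ≥ 1. For every b ∈ L_n, the segment-type T(b) is a half-open interval: there exist reals v < u with 0 ≤ v and u ≤ 1 such that T(b) = [v,u) or T(b) = (v,u]. -/

import Mathlib

open Set MeasureTheory

/-- The tent map `f(x) = μx` for `x ≤ 1/2` and `μ(1-x)` for `x ≥ 1/2`. -/
noncomputable def tentMap (μ : ℝ) (x : ℝ) : ℝ :=
  if x ≤ 1/2 then μ * x else μ * (1 - x)

/-- `tentBit μ x k` is the `(k+1)`-st bit `b_{k+1}` of the tent code of `x`. -/
noncomputable def tentBit (μ x : ℝ) : ℕ → Bool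
  | 0 => if 1/2 ≤ x then true else false
  | k + 1 =>
    if (tentMap μ)^[k+1] x < 1/2 then tentBit μ x k
    else if 1/2 < (tentMap μ)^[k+1] x then !(tentBit μ x k)
    else true

/-- The tent code `γ^n(x) = b_1 ⋯ b_n`. -/
noncomputable def tentCode (μ : ℝ) (n : ℕ) (x : ℝ) : List Bool :=
  (List.range n).map (tentBit μ x)

/-- The tent language `L_n = {γ^n(x) : x ∈ [0,1)}`. -/
def tentLang (μ : ℝ) (n : ℕ) : Set (List Bool) :=
  {w | ∃ x ∈ Set.Ico (0:ℝ) 1, tentCode μ n x = w}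

/-- The segment-type `T(w) = {f^n(x) : x ∈ [0,1), γ^n(x) = w}`. -/
def segType (μ : ℝ) (n : ℕ) (w : List Bool) : Set ℝ :=
  {y | ∃ x ∈ Set.Ico (0:ℝ) 1, tentCode μ n x = w ∧ (tentMap μ)^[n] x = y}

/-- The set of segment-types `𝒯_n = {T(w) : w ∈ L_n}`. -/
def typeSet (μ : ℝ) (n : ℕ) : Set (Set ℝ) :=
  {S | ∃ w ∈ tentLang μ n, segType μ n w = S}

/-- `I_i = T(γ^i(1/2))`. -/
noncomputable def Iseg (μ : ℝ) (i : ℕ) : Set ℝ :=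
  segType μ i (tentCode μ i (1/2))

/-- `Ī_i = T(c̄_i)` where `c̄_i` is the bitwise complement of `γ^i(1/2)`. -/
noncomputable def Isegbar (μ : ℝ) (i : ℕ) : Set ℝ :=
  segType μ i ((tentCode μ i (1/2)).map (fun b => !b))

/-- The length of the interval `T(w)` (zero if `T(w)` is empty). -/
noncomputable def segLen (μ : ℝ) (n : ℕ) (w : List Bool) : ℝ :=
  (MeasureTheory.volume (segType μ n w)).toReal

/-! ### Auxiliary material -/

/-- The next bit as a function of the current point and previous bit. -/
noncomputable def newBit (z : ℝ) (c : Bool) : Bool :=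
  if z < 1/2 then c else if 1/2 < z then !c else true

lemma tentBit_succ (μ x : ℝ) (k : ℕ) :
    tentBit μ x (k+1) = newBit ((tentMap μ)^[k+1] x) (tentBit μ x k) := rfl

lemma tentCode_succ (μ : ℝ) (n : ℕ) (x : ℝ) :
    tentCode μ (n+1) x = tentCode μ n x ++ [tentBit μ x n] := by
  simp [tentCode, List.range_succ]

lemma tentCode_length (μ : ℝ) (n : ℕ) (x : ℝ) : (tentCode μ n x).length = n := by
  simp [tentCode]

lemma tentCode_getLast? (μ : ℝ) (n : ℕ) (x : ℝ) :
    (tentCode μ (n+1) x).getLast? = some (tentBit μ x n) := by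
  simp [tentCode_succ]

lemma tentBit_zero (μ x : ℝ) : tentBit μ x 0 = if 1/2 ≤ x then true else false := rfl

lemma tentCode_one (μ x : ℝ) : tentCode μ 1 x = [tentBit μ x 0] := by
  simp [tentCode, List.range_succ]

lemma tentMap_eq_left (μ z : ℝ) (hz : z ≤ 1/2) : tentMap μ z = μ * z := if_pos hz

lemma tentMap_eq_right (μ z : ℝ) (hz : 1/2 ≤ z) : tentMap μ z = μ * (1 - z) := by
  unfold tentMap
  split_ifs with h
  · have : z = (1:ℝ)/2 := le_antisymm h hz
    rw [this]; ring
  · rfl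

lemma newBit_set_ff_ff : {z : ℝ | newBit z false = false} = Iio (1/2) := by
  ext z; simp only [mem_setOf_eq, mem_Iio, newBit]
  split_ifs with h1 h2 <;> simp_all <;> linarith

lemma newBit_set_ff_tt : {z : ℝ | newBit z false = true} = Ici (1/2) := by
  ext z; simp only [mem_setOf_eq, mem_Ici, newBit]
  split_ifs with h1 h2 <;> simp_all <;> linarith

lemma newBit_set_tt_tt : {z : ℝ | newBit z true = true} = Iic (1/2) := by
  ext z; simp only [mem_setOf_eq, mem_Iic, newBit]
  split_ifs with h1 h2 <;> simp_all <;> linarith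

lemma newBit_set_tt_ff : {z : ℝ | newBit z true = false} = Ioi (1/2) := by
  ext z; simp only [mem_setOf_eq, mem_Ioi, newBit]
  split_ifs with h1 h2 <;> simp_all <;> linarith

lemma image_mul_Ico' (μ a b : ℝ) (hμ : 0 < μ) :
    (fun z => μ * z) '' Ico a b = Ico (μ*a) (μ*b) := by
  ext y; simp only [mem_image, mem_Ico]
  constructor
  · rintro ⟨z, ⟨h1, h2⟩, rfl⟩
    constructor <;> nlinarith
  · rintro ⟨h1, h2⟩
    refine ⟨y / μ, ⟨?_, ?_⟩, ?_⟩
    · rw [le_div_iff₀ hμ]; nlinarith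
    · rw [div_lt_iff₀ hμ]; nlinarith
    · field_simp
lemma image_mul_Ioc' (μ a b : ℝ) (hμ : 0 < μ) :
    (fun z => μ * z) '' Ioc a b = Ioc (μ*a) (μ*b) := by
  ext y; simp only [mem_image, mem_Ioc]
  constructor
  · rintro ⟨z, ⟨h1, h2⟩, rfl⟩
    constructor <;> nlinarith
  · rintro ⟨h1, h2⟩
    refine ⟨y / μ, ⟨?_, ?_⟩, ?_⟩
    · rw [lt_div_iff₀ hμ]; nlinarith
    · rw [div_le_iff₀ hμ]; nlinarith
    · field_simp

lemma image_dec_Ico (μ a b : ℝ) (hμ : 0 < μ) :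
    (fun z => μ * (1 - z)) '' Ico a b = Ioc (μ*(1-b)) (μ*(1-a)) := by
  ext y; simp only [mem_image, mem_Ico, mem_Ioc]
  constructor
  · rintro ⟨z, ⟨h1, h2⟩, rfl⟩
    constructor <;> nlinarith
  · rintro ⟨h1, h2⟩
    refine ⟨1 - y / μ, ⟨?_, ?_⟩, ?_⟩
    · have : y / μ ≤ 1 - a := by rw [div_le_iff₀ hμ]; nlinarith
      linarith
    · have : 1 - b < y / μ := by rw [lt_div_iff₀ hμ]; nlinarith
      linarith
    · field_simp; ring

lemma image_dec_Ioc (μ a b : ℝ) (hμ : 0 < μ) :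
    (fun z => μ * (1 - z)) '' Ioc a b = Ico (μ*(1-b)) (μ*(1-a)) := by
  ext y; simp only [mem_image, mem_Ioc, mem_Ico]
  constructor
  · rintro ⟨z, ⟨h1, h2⟩, rfl⟩
    constructor <;> nlinarith
  · rintro ⟨h1, h2⟩
    refine ⟨1 - y / μ, ⟨?_, ?_⟩, ?_⟩
    · have : y / μ < 1 - a := by rw [div_lt_iff₀ hμ]; nlinarith
      linarith
    · have : 1 - b ≤ y / μ := by rw [le_div_iff₀ hμ]; nlinarith
      linarith
    · field_simp; ring

lemma segType_concat (μ : ℝ) (m : ℕ) (w : List Bool) (c b : Bool)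
    (hlast : w.getLast? = some c) :
    segType μ (m+2) (w ++ [b]) =
      tentMap μ '' (segType μ (m+1) w ∩ {z | newBit z c = b}) := by
  ext y
  constructor
  · rintro ⟨x, hx, hcode, hfy⟩
    rw [tentCode_succ] at hcode
    have hlenw : w.length = m + 1 := by
      have := congrArg List.length hcode
      simp [tentCode_length] at this
      omega
    have hlen' : (tentCode μ (m+1) x).length = w.length := by
      rw [tentCode_length, hlenw]
    obtain ⟨hw, hb⟩ : tentCode μ (m+1) x = w ∧ tentBit μ x (m+1) = b := by
      have := List.append_inj hcode hlen'
      simpa using this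
    have hc : c = tentBit μ x m := by
      have h := tentCode_getLast? μ m x
      rw [hw, hlast] at h
      injection h
    refine ⟨(tentMap μ)^[m+1] x, ⟨⟨x, hx, hw, rfl⟩, ?_⟩, ?_⟩
    · show newBit _ c = b
      rw [hc, ← tentBit_succ]; exact hb
    · rw [← Function.iterate_succ_apply' (tentMap μ) (m+1) x]; exact hfy
  · rintro ⟨z, ⟨⟨x, hx, hw, hfz⟩, hbz⟩, hy⟩
    have hc : c = tentBit μ x m := by
      have h := tentCode_getLast? μ m x
      rw [hw, hlast] at h
      injection h
    refine ⟨x, hx, ?_, ?_⟩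
    · rw [tentCode_succ, hw]
      have : tentBit μ x (m+1) = b := by
        rw [tentBit_succ, hfz, ← hc]; exact hbz
      rw [this]
    · rw [Function.iterate_succ_apply', hfz, hy]

lemma segType_base_ff (μ : ℝ) (hμ1 : 1 < μ) (hμ2 : μ < 2) :
    segType μ 1 [false] = Ico 0 (μ/2) := by
  have hμ0 : (0:ℝ) < μ := by linarith
  ext y
  simp only [segType, mem_setOf_eq, mem_Ico]
  constructor
  · rintro ⟨x, ⟨hx0, hx1⟩, hcode, hy⟩
    have hb : tentBit μ x 0 = false := by
      have := congrArg (fun l => l.headI) hcode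
      simpa [tentCode_one] using this
    have hxlt : x < 1/2 := by
      by_contra h
      push_neg at h
      rw [tentBit_zero, if_pos h] at hb
      exact Bool.noConfusion hb
    have : (tentMap μ)^[1] x = μ * x := by
      simp [Function.iterate_one, tentMap_eq_left μ x (le_of_lt hxlt)]
    rw [this] at hy
    constructor <;> nlinarith
  · rintro ⟨h0, h1⟩
    refine ⟨y / μ, ⟨by positivity, ?_⟩, ?_, ?_⟩
    · rw [div_lt_one hμ0]; nlinarith
    · have hlt : y / μ < 1/2 := by rw [div_lt_iff₀ hμ0]; nlinarith
      rw [tentCode_one, tentBit_zero, if_neg (not_le.mpr hlt)]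
    · have hle : y / μ ≤ 1/2 := by rw [div_le_iff₀ hμ0]; nlinarith
      rw [Function.iterate_one, tentMap_eq_left μ _ hle]
      field_simp

lemma segType_base_tt (μ : ℝ) (hμ1 : 1 < μ) (hμ2 : μ < 2) :
    segType μ 1 [true] = Ioc 0 (μ/2) := by
  have hμ0 : (0:ℝ) < μ := by linarith
  ext y
  simp only [segType, mem_setOf_eq, mem_Ioc]
  constructor
  · rintro ⟨x, ⟨hx0, hx1⟩, hcode, hy⟩
    have hb : tentBit μ x 0 = true := by
      have := congrArg (fun l => l.headI) hcode
      simpa [tentCode_one] using this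
    have hxge : 1/2 ≤ x := by
      by_contra h
      push_neg at h
      rw [tentBit_zero, if_neg (not_le.mpr h)] at hb
      exact Bool.noConfusion hb
    have : (tentMap μ)^[1] x = μ * (1 - x) := by
      simp [Function.iterate_one, tentMap_eq_right μ x hxge]
    rw [this] at hy
    constructor <;> nlinarith
  · rintro ⟨h0, h1⟩
    have hdiv : y / μ ≤ 1/2 := by rw [div_le_iff₀ hμ0]; nlinarith
    have hdiv' : 0 < y / μ := by positivity
    refine ⟨1 - y / μ, ⟨by linarith, by linarith⟩, ?_, ?_⟩
    · have h2 : (1:ℝ)/2 ≤ 1 - y / μ := by linarith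
      rw [tentCode_one, tentBit_zero, if_pos h2]
    · have h2 : (1:ℝ)/2 ≤ 1 - y / μ := by linarith
      rw [Function.iterate_one, tentMap_eq_right μ _ h2]
      field_simp; ring

lemma segType_shape (μ : ℝ) (hμ1 : 1 < μ) (hμ2 : μ < 2) :
    ∀ n : ℕ, ∀ w ∈ tentLang μ (n+1), ∃ v u : ℝ, 0 ≤ v ∧ u ≤ 1 ∧
      ((w.getLast? = some false ∧ segType μ (n+1) w = Set.Ico v u) ∨
       (w.getLast? = some true  ∧ segType μ (n+1) w = Set.Ioc v u)) := by
  have hμ0 : (0:ℝ) < μ := by linarith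
  intro n
  induction n with
  | zero =>
    rintro w ⟨x, hx, hcode⟩
    have hw : w = [tentBit μ x 0] := by
      rw [← hcode]; exact tentCode_one μ x
    cases hb : tentBit μ x 0 with
    | false =>
      refine ⟨0, μ/2, le_refl _, by linarith, Or.inl ⟨?_, ?_⟩⟩
      · rw [hw, hb]; rfl
      · rw [hw, hb]; exact segType_base_ff μ hμ1 hμ2
    | true =>
      refine ⟨0, μ/2, le_refl _, by linarith, Or.inr ⟨?_, ?_⟩⟩
      · rw [hw, hb]; rfl
      · rw [hw, hb]; exact segType_base_tt μ hμ1 hμ2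
  | succ m ih =>
    rintro w ⟨x, hx, hcode⟩
    have hw'mem : tentCode μ (m+1) x ∈ tentLang μ (m+1) := ⟨x, hx, rfl⟩
    obtain ⟨v, u, h0v, hu1, hcase⟩ := ih _ hw'mem
    have hw : w = tentCode μ (m+1) x ++ [tentBit μ x (m+1)] := by
      rw [← hcode, tentCode_succ]
    rcases hcase with ⟨hlast, hseg⟩ | ⟨hlast, hseg⟩
    · -- previous bit false, T(w') = Ico v u
      cases hb : tentBit μ x (m+1) with
      | false =>
        rw [hb] at hw
        have hconcat := segType_concat μ m _ false false hlast
        rw [hseg, newBit_set_ff_ff, Ico_inter_Iio] at hconcat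
        have himg : tentMap μ '' Ico v (min u (1/2)) =
            (fun z => μ * z) '' Ico v (min u (1/2)) := by
          apply image_congr
          intro z hz
          exact tentMap_eq_left μ z (le_of_lt (lt_of_lt_of_le hz.2 (min_le_right _ _)))
        rw [himg, image_mul_Ico' μ _ _ hμ0] at hconcat
        refine ⟨μ * v, μ * min u (1/2), by positivity, ?_, Or.inl ⟨?_, ?_⟩⟩
        · have := min_le_right u (1/2:ℝ)
          nlinarith
        · rw [hw]; simp
        · rw [hw]; exact hconcat
      | true =>
        rw [hb] at hw
        have hconcat := segType_concat μ m _ false true hlast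
        rw [hseg, newBit_set_ff_tt, Ico_inter_Ici] at hconcat
        have himg : tentMap μ '' Ico (v ⊔ 1/2) u =
            (fun z => μ * (1 - z)) '' Ico (v ⊔ 1/2) u := by
          apply image_congr
          intro z hz
          exact tentMap_eq_right μ z (le_trans (le_max_right _ _) hz.1)
        rw [himg, image_dec_Ico μ _ _ hμ0] at hconcat
        refine ⟨μ * (1 - u), μ * (1 - (v ⊔ 1/2)), by nlinarith, ?_, Or.inr ⟨?_, ?_⟩⟩
        · have := le_max_right v (1/2:ℝ)
          nlinarith
        · rw [hw]; simp
        · rw [hw]; exact hconcat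
    · -- previous bit true, T(w') = Ioc v u
      cases hb : tentBit μ x (m+1) with
      | true =>
        rw [hb] at hw
        have hconcat := segType_concat μ m _ true true hlast
        rw [hseg, newBit_set_tt_tt, Ioc_inter_Iic] at hconcat
        have himg : tentMap μ '' Ioc v (u ⊓ 1/2) =
            (fun z => μ * z) '' Ioc v (u ⊓ 1/2) := by
          apply image_congr
          intro z hz
          exact tentMap_eq_left μ z (le_trans hz.2 (min_le_right _ _))
        rw [himg, image_mul_Ioc' μ _ _ hμ0] at hconcat
        refine ⟨μ * v, μ * (u ⊓ 1/2), by positivity, ?_, Or.inr ⟨?_, ?_⟩⟩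
        · have := min_le_right u (1/2:ℝ)
          nlinarith
        · rw [hw]; simp
        · rw [hw]; exact hconcat
      | false =>
        rw [hb] at hw
        have hconcat := segType_concat μ m _ true false hlast
        rw [hseg, newBit_set_tt_ff, Ioc_inter_Ioi] at hconcat
        have himg : tentMap μ '' Ioc (v ⊔ 1/2) u =
            (fun z => μ * (1 - z)) '' Ioc (v ⊔ 1/2) u := by
          apply image_congr
          intro z hz
          exact tentMap_eq_right μ z (le_of_lt (lt_of_le_of_lt (le_max_right _ _) hz.1))
        rw [himg, image_dec_Ioc μ _ _ hμ0] at hconcat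
        refine ⟨μ * (1 - u), μ * (1 - (v ⊔ 1/2)), by nlinarith, ?_, Or.inl ⟨?_, ?_⟩⟩
        · have := le_max_right v (1/2:ℝ)
          nlinarith
        · rw [hw]; simp
        · rw [hw]; exact hconcat

/-- every segment-type is a half-open interval contained in `[0,1]`. -/
theorem segType_halfopen (μ : ℝ) (hμ1 : 1 < μ) (hμ2 : μ < 2)
    (n : ℕ) (hn : 1 ≤ n) (w : List Bool) (hw : w ∈ tentLang μ n) :
    ∃ v u : ℝ, v < u ∧ 0 ≤ v ∧ u ≤ 1 ∧
      (segType μ n w = Set.Ico v u ∨ segType μ n w = Set.Ioc v u) := by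
  obtain ⟨m, rfl⟩ : ∃ m, n = m + 1 := ⟨n - 1, by omega⟩
  obtain ⟨v, u, h0v, hu1, hcase⟩ := segType_shape μ hμ1 hμ2 m w hw
  obtain ⟨x, hx, hcode⟩ := hw
  have hmem : (tentMap μ)^[m+1] x ∈ segType μ (m+1) w := ⟨x, hx, hcode, rfl⟩
  rcases hcase with ⟨_, hseg⟩ | ⟨_, hseg⟩
  · rw [hseg] at hmem
    exact ⟨v, u, lt_of_le_of_lt hmem.1 hmem.2, h0v, hu1, Or.inl hseg⟩
  · rw [hseg] at hmem
    exact ⟨v, u, lt_of_lt_of_le hmem.1 hmem.2, h0v, hu1, Or.inr hseg⟩
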